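/- Define the debiased estimator b̂_{-G} = β̂_{-G} + (1/n) M X_{-G}^T (I − P_G)(Y − X_{-G}β̂_{-G}) and b̂_G = (X_G^T X_G)^{-1} X_G^T (Y − X_{-G} b̂_{-G}). Then with Y = X_G β_G⁰ + X_{-G}β_{-G}⁰ + ε, the exact identity holds: b̂_G = β_G⁰ + (X_G^T X_G)^{-1} X_G^T ε − (1/n) Θ M X_{-G}^T (I − P_G) ε − R(β̂_{-G} − β_{-G}⁰), where Θ = (X_G^T X_G)^{-1} X_G^T X_{-G} and R = Θ − (1/n) Θ M X_{-G}^T (I − P_G) X_{-G}. -/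
import Mathlib


open Matrix MeasureTheory ProbabilityTheory Real Filter

noncomputable section

/-- exact identity for the debiased estimator `b̂_G`. -/
theorem stmt11 {n k m : ℕ} (hn : 0 < n)
    (XG : Matrix (Fin n) (Fin k) ℝ) (Xm : Matrix (Fin n) (Fin m) ℝ)
    (hpd : (XGᵀ * XG).PosDef)
    (P : Matrix (Fin n) (Fin n) ℝ) (hP : P = XG * (XGᵀ * XG)⁻¹ * XGᵀ)
    (M : Matrix (Fin m) (Fin m) ℝ)
    (βG0 : Fin k → ℝ) (βm0 : Fin m → ℝ) (ε : Fin n → ℝ)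
    (Y : Fin n → ℝ) (hY : Y = XG.mulVec βG0 + Xm.mulVec βm0 + ε)
    (βhatm : Fin m → ℝ)
    (bhatm : Fin m → ℝ)
    (hbm : bhatm = βhatm + (1 / (n : ℝ)) •
      (M * Xmᵀ * (1 - P)).mulVec (Y - Xm.mulVec βhatm))
    (bhatG : Fin k → ℝ)
    (hbG : bhatG = ((XGᵀ * XG)⁻¹ * XGᵀ).mulVec (Y - Xm.mulVec bhatm))
    (Θ : Matrix (Fin k) (Fin m) ℝ) (hΘ : Θ = (XGᵀ * XG)⁻¹ * XGᵀ * Xm)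
    (R : Matrix (Fin k) (Fin m) ℝ)
    (hR : R = Θ - (1 / (n : ℝ)) • (Θ * M * Xmᵀ * (1 - P) * Xm)) :
    bhatG = βG0 + ((XGᵀ * XG)⁻¹ * XGᵀ).mulVec ε
      - (1 / (n : ℝ)) • (Θ * M * Xmᵀ * (1 - P)).mulVec ε
      - R.mulVec (βhatm - βm0) := by
  have hdet : IsUnit (XGᵀ * XG).det := isUnit_iff_ne_zero.mpr hpd.det_pos.ne'
  have hinv : (XGᵀ * XG)⁻¹ * (XGᵀ * XG) = 1 := Matrix.nonsing_inv_mul _ hdet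
  have h2 : (1 - P) * XG = 0 := by
    rw [hP, Matrix.sub_mul, Matrix.one_mul, Matrix.mul_assoc, Matrix.mul_assoc,
      hinv, Matrix.mul_one, sub_self]
  have h2' : ∀ (v : Fin k → ℝ), (1 - P) *ᵥ (XG *ᵥ v) = 0 := by
    intro v; rw [Matrix.mulVec_mulVec, h2, Matrix.zero_mulVec]
  have h1' : ∀ (v : Fin k → ℝ), (XGᵀ * XG)⁻¹ *ᵥ (XGᵀ *ᵥ (XG *ᵥ v)) = v := by
    intro v
    rw [Matrix.mulVec_mulVec, Matrix.mulVec_mulVec, Matrix.mul_assoc, hinv, Matrix.one_mulVec]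
  subst hY hbm hbG hΘ hR
  simp only [h1', Matrix.mulVec_add, Matrix.mulVec_sub, Matrix.mulVec_smul,
    Matrix.add_mulVec, Matrix.sub_mulVec, Matrix.smul_mulVec,
    ← Matrix.mulVec_mulVec, h2', hinv, Matrix.one_mulVec,
    Matrix.mulVec_zero, smul_add, smul_sub, smul_zero]
  module
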